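/- arXiv:2204.06473 — 2 statements merged into one kernel-verified Lean document; each statement's English description precedes it below -/
import Mathlib

section
/- Let U ⊆ ℂ^N be open and S a finite index set. Let a = (a_{m,n}) and b = (b_{m,n}) be families of holomorphic functions U → ℂ indexed by m ∈ ℕ^S and n ∈ ℤ, each satisfying condition (O^{y,z,z⁻¹}). Then for every m ∈ ℕ^S and n ∈ ℤ the convolution sum c_{m,n} = Σ_{m₁+m₂=m, n₁+n₂=n} a_{m₁,n₁} · b_{m₂,n₂} has only finitely many nonzero terms, and the family c = (c_{m,n}) again satisfies condition (O^{y,z,z⁻¹}). In other words, the space O^{y,z,z⁻¹}_λ(U) is closed under multiplication of formal series Σ a_{m,n} y^m z^n. -/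
/-- The total degree `|m| = ∑_s m_s` of a multi-index `m ∈ ℕ^S`. -/
def wtF {S : Type*} (m : S →₀ ℕ) : ℕ := m.sum fun _ v => v

/-- Condition `(O^{y,z,z⁻¹})` on a family of functions `a_{m,n} : U → ℂ` (`m ∈ ℕ^S`, `n ∈ ℤ`):
there exist a continuous `C : U → [1, ∞)` and a constant `C' ≥ 1` such that
(1) `a_{m,n} = 0` whenever `n < −C'(|m| + 1)`, and
(2) `|a_{m,n}(λ)| ≤ C(λ)^{|m|+|n|+1} · n!` if `n ≥ 0`, and
    `|a_{m,n}(λ)| ≤ C(λ)^{|m|+|n|+1} / (−n)!` if `n < 0`. -/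
def CondOyzzinv {N : ℕ} {S : Type*} (U : Set (Fin N → ℂ))
    (a : (S →₀ ℕ) → ℤ → (Fin N → ℂ) → ℂ) : Prop :=
  ∃ (C : (Fin N → ℂ) → ℝ) (C' : ℝ), ContinuousOn C U ∧ (∀ x ∈ U, 1 ≤ C x) ∧ 1 ≤ C' ∧
    (∀ (m : S →₀ ℕ) (n : ℤ), (n : ℝ) < -C' * ((wtF m : ℝ) + 1) → ∀ x ∈ U, a m n x = 0) ∧
    (∀ m n x, x ∈ U → ‖a m n x‖ ≤
      C x ^ (wtF m + n.natAbs + 1) *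
        (if 0 ≤ n then ((n.toNat).factorial : ℝ) else (((-n).toNat).factorial : ℝ)⁻¹))


lemma choose_le_two_pow' (n k : ℕ) : n.choose k ≤ 2 ^ n := by
  rcases le_or_gt k n with h | h
  · calc n.choose k ≤ ∑ i ∈ Finset.range (n+1), n.choose i :=
        Finset.single_le_sum (fun i _ => Nat.zero_le _) (Finset.mem_range.2 (by omega))
    _ = 2 ^ n := Nat.sum_range_choose n
  · simp [Nat.choose_eq_zero_of_lt h]

lemma add_factorial_le (i j : ℕ) :
    (i + j).factorial ≤ 2 ^ (i + j) * (i.factorial * j.factorial) := by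
  have h := Nat.add_choose_mul_factorial_mul_factorial i j
  calc (i + j).factorial = (i+j).choose j * i.factorial * j.factorial := h.symm
  _ ≤ 2 ^ (i+j) * i.factorial * j.factorial := by
      have := choose_le_two_pow' (i+j) j
      exact Nat.mul_le_mul_right _ (Nat.mul_le_mul_right _ this)
  _ = 2 ^ (i + j) * (i.factorial * j.factorial) := by ring

lemma factorial_mul_factorial_le_add (i j : ℕ) :
    i.factorial * j.factorial ≤ (i + j).factorial :=
  Nat.le_of_dvd (Nat.factorial_pos _) (Nat.factorial_mul_factorial_dvd_factorial_add i j)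

noncomputable def ffun (n : ℤ) : ℝ :=
  if 0 ≤ n then ((n.toNat).factorial : ℝ) else (((-n).toNat).factorial : ℝ)⁻¹

lemma ffun_pos (n : ℤ) : 0 < ffun n := by
  unfold ffun; split <;> positivity

lemma ffun_nonneg (n : ℤ) : 0 ≤ ffun n := (ffun_pos n).le

lemma fbound_pos (n₁ n₂ : ℤ) (h₁ : 0 ≤ n₁) :
    (if 0 ≤ n₁ then ((n₁.toNat).factorial : ℝ) else (((-n₁).toNat).factorial : ℝ)⁻¹) *
    (if 0 ≤ n₂ then ((n₂.toNat).factorial : ℝ) else (((-n₂).toNat).factorial : ℝ)⁻¹) ≤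
    2 ^ (n₁.natAbs + n₂.natAbs) *
    (if 0 ≤ n₁ + n₂ then (((n₁+n₂).toNat).factorial : ℝ)
     else (((-(n₁+n₂)).toNat).factorial : ℝ)⁻¹) := by
  rw [if_pos h₁]
  rcases le_or_gt 0 n₂ with h₂ | h₂
  · rw [if_pos h₂, if_pos (by omega)]
    have hadd : (n₁ + n₂).toNat = n₁.toNat + n₂.toNat := by omega
    calc ((n₁.toNat).factorial : ℝ) * (n₂.toNat).factorial
        = ((n₁.toNat.factorial * n₂.toNat.factorial : ℕ) : ℝ) := by push_cast; ring
      _ ≤ (((n₁+n₂).toNat).factorial : ℝ) := by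
          exact_mod_cast hadd ▸ factorial_mul_factorial_le_add n₁.toNat n₂.toNat
      _ ≤ 2 ^ (n₁.natAbs + n₂.natAbs) * (((n₁+n₂).toNat).factorial : ℝ) := by
          nlinarith [pow_pos (by norm_num : (0:ℝ) < 2) (n₁.natAbs + n₂.natAbs),
            one_le_pow₀ (by norm_num : (1:ℝ) ≤ 2) (n := n₁.natAbs + n₂.natAbs),
            (Nat.cast_pos.2 ((n₁+n₂).toNat.factorial_pos) : (0:ℝ) < _)]
  · rw [if_neg (not_le.2 h₂)]
    set k₂ := (-n₂).toNat with hk₂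
    rcases le_or_gt 0 (n₁ + n₂) with hn | hn
    · rw [if_pos hn]
      set s := (n₁ + n₂).toNat with hs
      have hsum : n₁.toNat = s + k₂ := by omega
      have hAle : n₁.natAbs + n₂.natAbs = s + 2 * k₂ := by omega
      rw [mul_comm ((n₁.toNat.factorial : ℝ)) _, ← div_eq_inv_mul,
        div_le_iff₀ (by positivity)]
      calc ((n₁.toNat).factorial : ℝ) = (((s + k₂).factorial : ℕ) : ℝ) := by rw [hsum]
        _ ≤ ((2 ^ (s + k₂) * (s.factorial * k₂.factorial) : ℕ) : ℝ) := by
            exact_mod_cast add_factorial_le s k₂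
        _ ≤ 2 ^ (n₁.natAbs + n₂.natAbs) * (s.factorial : ℝ) * (k₂.factorial : ℝ) := by
            push_cast
            rw [hAle]
            have h2 : (2:ℝ) ^ (s + k₂) ≤ 2 ^ (s + 2 * k₂) :=
              pow_le_pow_right₀ (by norm_num) (by omega)
            rw [mul_assoc]
            exact mul_le_mul_of_nonneg_right h2 (by positivity)
    · rw [if_neg (not_le.2 hn)]
      set k := (-(n₁ + n₂)).toNat with hk
      have hsum : k₂ = n₁.toNat + k := by omega
      rw [← div_eq_mul_inv, ← div_eq_mul_inv, div_le_div_iff₀ (by positivity) (by positivity)]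
      calc ((n₁.toNat).factorial : ℝ) * (k.factorial : ℝ)
          = ((n₁.toNat.factorial * k.factorial : ℕ) : ℝ) := by push_cast; ring
        _ ≤ ((k₂.factorial : ℕ) : ℝ) := by
            exact_mod_cast hsum ▸ factorial_mul_factorial_le_add n₁.toNat k
        _ ≤ 2 ^ (n₁.natAbs + n₂.natAbs) * (k₂.factorial : ℝ) := by
            nlinarith [one_le_pow₀ (by norm_num : (1:ℝ) ≤ 2) (n := n₁.natAbs + n₂.natAbs),
              (Nat.cast_pos.2 k₂.factorial_pos : (0:ℝ) < _)]

lemma fbound (n₁ n₂ : ℤ) :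
    ffun n₁ * ffun n₂ ≤ 2 ^ (n₁.natAbs + n₂.natAbs) * ffun (n₁ + n₂) := by
  rcases le_or_gt 0 n₁ with h₁ | h₁
  · exact fbound_pos n₁ n₂ h₁
  rcases le_or_gt 0 n₂ with h₂ | h₂
  · have h := fbound_pos n₂ n₁ h₂
    unfold ffun
    rw [mul_comm, add_comm n₁ n₂, add_comm n₁.natAbs]
    exact h
  · unfold ffun
    rw [if_neg (not_le.2 h₁), if_neg (not_le.2 h₂), if_neg (by omega)]
    set k₁ := (-n₁).toNat with hk₁
    set k₂ := (-n₂).toNat with hk₂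
    set k := (-(n₁ + n₂)).toNat with hk
    have hsum : k = k₁ + k₂ := by omega
    have hA : n₁.natAbs + n₂.natAbs = k₁ + k₂ := by omega
    rw [← mul_inv, ← div_eq_mul_inv (2 ^ _ : ℝ), le_div_iff₀ (by positivity),
      inv_mul_eq_div, div_le_iff₀ (by positivity)]
    calc ((k.factorial : ℕ) : ℝ) = (((k₁ + k₂).factorial : ℕ) : ℝ) := by rw [hsum]
      _ ≤ ((2 ^ (k₁ + k₂) * (k₁.factorial * k₂.factorial) : ℕ) : ℝ) := by
          exact_mod_cast add_factorial_le k₁ k₂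
      _ = 2 ^ (n₁.natAbs + n₂.natAbs) * (k₁.factorial * k₂.factorial : ℝ) := by
          rw [hA]; push_cast; ring

lemma wtF_add {S : Type*} (m₁ m₂ : S →₀ ℕ) : wtF (m₁ + m₂) = wtF m₁ + wtF m₂ :=
  Finsupp.sum_add_index' (fun _ => rfl) (fun _ _ _ => rfl)

lemma card_antidiagonal_le {S : Type*} [DecidableEq S] (m : S →₀ ℕ) :
    (Finset.HasAntidiagonal.antidiagonal m).card ≤ 2 ^ wtF m := by
  classical
  have hinj : Set.InjOn Prod.fst (Finset.HasAntidiagonal.antidiagonal m : Set ((S →₀ ℕ) × (S →₀ ℕ))) := by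
    intro p hp q hq h
    simp only [Finset.coe_sort_coe, Finset.mem_coe, Finset.HasAntidiagonal.mem_antidiagonal] at hp hq
    have : p.1 + p.2 = p.1 + q.2 := by rw [hp, ← hq, h]
    exact Prod.ext h (add_left_cancel this)
  calc (Finset.HasAntidiagonal.antidiagonal m).card
      = ((Finset.HasAntidiagonal.antidiagonal m).image Prod.fst).card :=
        (Finset.card_image_of_injOn hinj).symm
    _ ≤ (Finset.Iic m).card := by
        apply Finset.card_le_card
        intro x hx
        simp only [Finset.mem_image] at hx
        obtain ⟨p, hp, rfl⟩ := hx
        rw [Finset.HasAntidiagonal.mem_antidiagonal] at hp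
        exact Finset.mem_Iic.2 (hp ▸ le_add_right le_rfl)
    _ = ∏ i ∈ m.support, (m i + 1) := by
        rw [Finsupp.card_Iic]; simp [Nat.card_Iic]
    _ ≤ ∏ i ∈ m.support, 2 ^ (m i) :=
        Finset.prod_le_prod' fun i _ => Nat.lt_two_pow_self
    _ = 2 ^ wtF m := by rw [Finset.prod_pow_eq_pow_sum]; rfl

/-- If `a` and `b` are families of holomorphic functions on `U` satisfying
condition `(O^{y,z,z⁻¹})`, then each convolution coefficient
`c_{m,n} = ∑_{m₁+m₂=m, n₁+n₂=n} a_{m₁,n₁} · b_{m₂,n₂}` has only finitely many nonzero terms and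
the family `c` again satisfies `(O^{y,z,z⁻¹})`: the space `O^{y,z,z⁻¹}_λ(U)` is closed under
multiplication of formal series `∑ a_{m,n} y^m z^n`. -/
theorem stmt_4 {N : ℕ} {S : Type*} [DecidableEq S] (U : Set (Fin N → ℂ))
    (a b : (S →₀ ℕ) → ℤ → (Fin N → ℂ) → ℂ)
    (haH : ∀ m n, DifferentiableOn ℂ (a m n) U)
    (hbH : ∀ m n, DifferentiableOn ℂ (b m n) U)
    (ha : CondOyzzinv U a) (hb : CondOyzzinv U b) :
    (∀ (m : S →₀ ℕ) (n : ℤ), Set.Finite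
      {q : ((S →₀ ℕ) × (S →₀ ℕ)) × ℤ | q.1 ∈ Finset.HasAntidiagonal.antidiagonal m ∧
        ∃ x ∈ U, a q.1.1 q.2 x * b q.1.2 (n - q.2) x ≠ 0}) ∧
    CondOyzzinv U (fun m n x =>
      ∑ p ∈ Finset.HasAntidiagonal.antidiagonal m, ∑ᶠ n₁ : ℤ, a p.1 n₁ x * b p.2 (n - n₁) x) := by
  classical
  obtain ⟨Ca, Ca', hCac, hCa1, hCa'1, hAz, hAb⟩ := ha
  obtain ⟨Cb, Cb', hCbc, hCb1, hCb'1, hBz, hBb⟩ := hb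
  set A : ℕ := ⌈Ca'⌉₊ with hA
  set B : ℕ := ⌈Cb'⌉₊ with hB
  -- weights of summands in the antidiagonal
  have hwt : ∀ (m : S →₀ ℕ) (p : (S →₀ ℕ) × (S →₀ ℕ)), p ∈ Finset.HasAntidiagonal.antidiagonal m →
      wtF p.1 + wtF p.2 = wtF m := by
    intro m p hp
    rw [← Finset.HasAntidiagonal.mem_antidiagonal.1 hp, wtF_add]
  -- nonzero products give real bounds on n₁
  have nz : ∀ (m : S →₀ ℕ) (n n₁ : ℤ) (p : (S →₀ ℕ) × (S →₀ ℕ)), ∀ x ∈ U,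
      a p.1 n₁ x * b p.2 (n - n₁) x ≠ 0 →
      -Ca' * ((wtF p.1 : ℝ) + 1) ≤ (n₁ : ℝ) ∧
        -Cb' * ((wtF p.2 : ℝ) + 1) ≤ (n : ℝ) - (n₁ : ℝ) := by
    intro m n n₁ p x hx hne
    constructor
    · by_contra hlt
      exact hne (by rw [hAz p.1 n₁ (by push_neg at hlt; exact hlt) x hx, zero_mul])
    · by_contra hlt
      push_neg at hlt
      refine hne (by rw [hBz p.2 (n - n₁) (by push_cast; linarith) x hx, mul_zero])
  -- nonzero products give integer interval bounds on n₁
  have key : ∀ (m : S →₀ ℕ) (n n₁ : ℤ) (p : (S →₀ ℕ) × (S →₀ ℕ)),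
      p ∈ Finset.HasAntidiagonal.antidiagonal m → ∀ x ∈ U,
      a p.1 n₁ x * b p.2 (n - n₁) x ≠ 0 →
      -(((A + B) * (wtF m + 1) : ℕ) : ℤ) ≤ n₁ ∧
        n₁ ≤ n + (((A + B) * (wtF m + 1) : ℕ) : ℤ) := by
    intro m n n₁ p hp x hx hne
    obtain ⟨h1, h2⟩ := nz m n n₁ p x hx hne
    have hw := hwt m p hp
    have hwp1 : wtF p.1 ≤ wtF m := by omega
    have hwp2 : wtF p.2 ≤ wtF m := by omega
    have hCaA : Ca' ≤ (A : ℝ) := Nat.le_ceil _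
    have hCbB : Cb' ≤ (B : ℝ) := Nat.le_ceil _
    have hwm0 : (0:ℝ) ≤ (wtF m : ℝ) + 1 := by positivity
    have hL1 : Ca' * ((wtF p.1 : ℝ) + 1) ≤ ((A:ℝ) + (B:ℝ)) * ((wtF m : ℝ) + 1) := by
      have step := mul_le_mul hCaA (add_le_add_right (Nat.cast_le.2 hwp1) (1:ℝ))
        (by positivity) (Nat.cast_nonneg A)
      nlinarith [mul_nonneg (Nat.cast_nonneg (α := ℝ) B) hwm0]
    have hL2 : Cb' * ((wtF p.2 : ℝ) + 1) ≤ ((A:ℝ) + (B:ℝ)) * ((wtF m : ℝ) + 1) := by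
      have step := mul_le_mul hCbB (add_le_add_right (Nat.cast_le.2 hwp2) (1:ℝ))
        (by positivity) (Nat.cast_nonneg B)
      nlinarith [mul_nonneg (Nat.cast_nonneg (α := ℝ) A) hwm0]
    constructor
    · have hr : -(((A:ℝ) + (B:ℝ)) * ((wtF m : ℝ) + 1)) ≤ (n₁ : ℝ) := by linarith
      exact_mod_cast hr
    · have hr : (n₁ : ℝ) ≤ (n : ℝ) + ((A:ℝ) + (B:ℝ)) * ((wtF m : ℝ) + 1) := by linarith
      exact_mod_cast hr
  constructor
  · -- finiteness
    intro m n
    apply Set.Finite.subset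
      ((Finset.HasAntidiagonal.antidiagonal m ×ˢ
        Finset.Icc (-(((A + B) * (wtF m + 1) : ℕ) : ℤ))
          (n + (((A + B) * (wtF m + 1) : ℕ) : ℤ))).finite_toSet)
    rintro ⟨p, n₁⟩ ⟨hp, x, hx, hne⟩
    obtain ⟨h1, h2⟩ := key m n n₁ p hp x hx hne
    simpa [Finset.mem_product, Finset.mem_Icc, hp] using ⟨h1, h2⟩
  -- the condition for the product family
  refine ⟨fun x => (max (max (Ca x) (Cb x)) 2) ^ (6 * (A + B) + 5), 2 * max Ca' Cb',
    ((hCac.sup hCbc).sup continuousOn_const).pow _, fun x hx => one_le_pow₀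
      (le_trans (by norm_num) (le_max_right _ 2)), by
        have := le_max_left Ca' Cb'; linarith, ?_, ?_⟩
  · -- vanishing
    intro m n hn x hx
    apply Finset.sum_eq_zero
    intro p hp
    apply finsum_eq_zero_of_forall_eq_zero
    intro n₁
    by_contra hne
    obtain ⟨h1, h2⟩ := nz m n n₁ p x hx hne
    have hw := hwt m p hp
    have hwcast : (wtF p.1 : ℝ) + (wtF p.2 : ℝ) = (wtF m : ℝ) := by exact_mod_cast hw
    have hmax1 : Ca' ≤ max Ca' Cb' := le_max_left _ _
    have hmax2 : Cb' ≤ max Ca' Cb' := le_max_right _ _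
    have hM1 : (1:ℝ) ≤ max Ca' Cb' := le_trans hCa'1 hmax1
    have hw1 : (0:ℝ) ≤ (wtF p.1 : ℝ) := Nat.cast_nonneg _
    have hw2 : (0:ℝ) ≤ (wtF p.2 : ℝ) := Nat.cast_nonneg _
    have hM0 : (0:ℝ) ≤ max Ca' Cb' := le_trans zero_le_one hM1
    have h3 : Ca' * ((wtF p.1 : ℝ) + 1) ≤ max Ca' Cb' * ((wtF p.1 : ℝ) + 1) :=
      mul_le_mul_of_nonneg_right hmax1 (by positivity)
    have h4 : Cb' * ((wtF p.2 : ℝ) + 1) ≤ max Ca' Cb' * ((wtF p.2 : ℝ) + 1) :=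
      mul_le_mul_of_nonneg_right hmax2 (by positivity)
    have h5 : max Ca' Cb' * ((wtF p.1 : ℝ) + 1) + max Ca' Cb' * ((wtF p.2 : ℝ) + 1) ≤
        2 * max Ca' Cb' * ((wtF m : ℝ) + 1) := by
      nlinarith [mul_nonneg hM0 hw1, mul_nonneg hM0 hw2]
    linarith [hn]
  · -- the bound
    intro m n x hx
    simp only []
    set L : ℕ := (A + B) * (wtF m + 1) with hL
    set T : Finset ℤ := Finset.Icc (-(L : ℤ)) (n + (L : ℤ)) with hT
    have hrw : (∑ p ∈ Finset.HasAntidiagonal.antidiagonal m, ∑ᶠ n₁ : ℤ, a p.1 n₁ x * b p.2 (n - n₁) x)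
        = ∑ p ∈ Finset.HasAntidiagonal.antidiagonal m, ∑ n₁ ∈ T, a p.1 n₁ x * b p.2 (n - n₁) x := by
      refine Finset.sum_congr rfl fun p hp => ?_
      refine finsum_eq_finset_sum_of_support_subset _ ?_
      intro n₁ hne
      obtain ⟨h1, h2⟩ := key m n n₁ p hp x hx hne
      exact Finset.mem_coe.2 (Finset.mem_Icc.2 ⟨h1, h2⟩)
    rw [hrw, show (if 0 ≤ n then ((n.toNat).factorial : ℝ)
      else (((-n).toNat).factorial : ℝ)⁻¹) = ffun n from rfl]
    set D := max (max (Ca x) (Cb x)) 2 with hD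
    have hD2 : (2:ℝ) ≤ D := le_max_right _ _
    have hD1 : (1:ℝ) ≤ D := by linarith
    have hD0 : (0:ℝ) ≤ D := by linarith
    have hCaD : Ca x ≤ D := le_trans (le_max_left _ _) (le_max_left _ _)
    have hCbD : Cb x ≤ D := le_trans (le_max_right _ _) (le_max_left _ _)
    have hCa0 : (0:ℝ) ≤ Ca x := le_trans zero_le_one (hCa1 x hx)
    have hCb0 : (0:ℝ) ≤ Cb x := le_trans zero_le_one (hCb1 x hx)
    set E₀ : ℕ := wtF m + 4 * (n.natAbs + L) + 2 with hE₀
    have hterm : ∀ p ∈ Finset.HasAntidiagonal.antidiagonal m, ∀ n₁ ∈ T,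
        ‖a p.1 n₁ x * b p.2 (n - n₁) x‖ ≤ D ^ E₀ * ffun n := by
      intro p hp n₁ hn₁
      obtain ⟨hm1, hm2⟩ := Finset.mem_Icc.1 hn₁
      have habs1 : n₁.natAbs ≤ n.natAbs + L := by omega
      have habs2 : (n - n₁).natAbs ≤ n.natAbs + L := by omega
      have hw := hwt m p hp
      have h1 : ‖a p.1 n₁ x‖ ≤
          Ca x ^ (wtF p.1 + n₁.natAbs + 1) * ffun n₁ := hAb p.1 n₁ x hx
      have h2 : ‖b p.2 (n - n₁) x‖ ≤
          Cb x ^ (wtF p.2 + (n - n₁).natAbs + 1) * ffun (n - n₁) := hBb p.2 (n - n₁) x hx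
      rw [norm_mul]
      calc ‖a p.1 n₁ x‖ * ‖b p.2 (n - n₁) x‖
          ≤ (Ca x ^ (wtF p.1 + n₁.natAbs + 1) * ffun n₁) *
            (Cb x ^ (wtF p.2 + (n - n₁).natAbs + 1) * ffun (n - n₁)) := by
            exact mul_le_mul h1 h2 (norm_nonneg _)
              (mul_nonneg (pow_nonneg hCa0 _) (ffun_nonneg _))
        _ ≤ (D ^ (wtF p.1 + n₁.natAbs + 1) * ffun n₁) *
            (D ^ (wtF p.2 + (n - n₁).natAbs + 1) * ffun (n - n₁)) := by
            exact mul_le_mul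
              (mul_le_mul_of_nonneg_right (pow_le_pow_left₀ hCa0 hCaD _) (ffun_nonneg _))
              (mul_le_mul_of_nonneg_right (pow_le_pow_left₀ hCb0 hCbD _) (ffun_nonneg _))
              (mul_nonneg (pow_nonneg hCb0 _) (ffun_nonneg _))
              (mul_nonneg (pow_nonneg hD0 _) (ffun_nonneg _))
        _ = D ^ ((wtF p.1 + n₁.natAbs + 1) + (wtF p.2 + (n - n₁).natAbs + 1)) *
            (ffun n₁ * ffun (n - n₁)) := by rw [pow_add]; ring
        _ ≤ D ^ ((wtF p.1 + n₁.natAbs + 1) + (wtF p.2 + (n - n₁).natAbs + 1)) *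
            (2 ^ (n₁.natAbs + (n - n₁).natAbs) * ffun (n₁ + (n - n₁))) :=
            mul_le_mul_of_nonneg_left (fbound n₁ (n - n₁)) (pow_nonneg hD0 _)
        _ ≤ D ^ ((wtF p.1 + n₁.natAbs + 1) + (wtF p.2 + (n - n₁).natAbs + 1)) *
            (D ^ (n₁.natAbs + (n - n₁).natAbs) * ffun (n₁ + (n - n₁))) := by
            exact mul_le_mul_of_nonneg_left (mul_le_mul_of_nonneg_right
              (pow_le_pow_left₀ (by norm_num) hD2 _) (ffun_nonneg _)) (pow_nonneg hD0 _)
        _ = D ^ ((wtF p.1 + n₁.natAbs + 1) + (wtF p.2 + (n - n₁).natAbs + 1) +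
            (n₁.natAbs + (n - n₁).natAbs)) * ffun n := by
            rw [show n₁ + (n - n₁) = n by ring, pow_add]; ring
        _ ≤ D ^ E₀ * ffun n := by
            refine mul_le_mul_of_nonneg_right (pow_le_pow_right₀ hD1 ?_) (ffun_nonneg n)
            omega
    have habsle : ‖∑ p ∈ Finset.HasAntidiagonal.antidiagonal m, ∑ n₁ ∈ T,
        a p.1 n₁ x * b p.2 (n - n₁) x‖ ≤
        ((Finset.HasAntidiagonal.antidiagonal m).card : ℝ) * ((T.card : ℝ) * (D ^ E₀ * ffun n)) := by
      refine le_trans (norm_sum_le _ _) ?_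
      refine le_trans (Finset.sum_le_sum fun p hp => norm_sum_le _ _) ?_
      refine le_trans (Finset.sum_le_sum fun p hp =>
        Finset.sum_le_sum fun n₁ hn₁ => hterm p hp n₁ hn₁) ?_
      apply le_of_eq
      simp only [Finset.sum_const, nsmul_eq_mul]
    have hcard1 : ((Finset.HasAntidiagonal.antidiagonal m).card : ℝ) ≤ D ^ wtF m := by
      calc ((Finset.HasAntidiagonal.antidiagonal m).card : ℝ) ≤ ((2 ^ wtF m : ℕ) : ℝ) := by
            exact_mod_cast card_antidiagonal_le m
        _ = (2:ℝ) ^ wtF m := by push_cast; ring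
        _ ≤ D ^ wtF m := pow_le_pow_left₀ (by norm_num) hD2 _
    have hcard2 : ((T.card : ℝ)) ≤ D ^ (n.natAbs + 2 * L) := by
      have hc : T.card ≤ n.natAbs + 2 * L + 1 := by
        rw [hT, Int.card_Icc]; omega
      calc ((T.card : ℝ)) ≤ ((n.natAbs + 2 * L + 1 : ℕ) : ℝ) := by exact_mod_cast hc
        _ ≤ ((2 ^ (n.natAbs + 2 * L) : ℕ) : ℝ) := by
            exact_mod_cast Nat.lt_two_pow_self (n := n.natAbs + 2 * L)
        _ = (2:ℝ) ^ (n.natAbs + 2 * L) := by push_cast; ring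
        _ ≤ D ^ (n.natAbs + 2 * L) := pow_le_pow_left₀ (by norm_num) hD2 _
    refine le_trans habsle ?_
    have hstep : ((Finset.HasAntidiagonal.antidiagonal m).card : ℝ) * ((T.card : ℝ) * (D ^ E₀ * ffun n)) ≤
        D ^ wtF m * (D ^ (n.natAbs + 2 * L) * (D ^ E₀ * ffun n)) := by
      have h0 : (0:ℝ) ≤ D ^ E₀ * ffun n := mul_nonneg (pow_nonneg hD0 _) (ffun_nonneg _)
      exact mul_le_mul hcard1
        (mul_le_mul hcard2 le_rfl h0 (pow_nonneg hD0 _))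
        (mul_nonneg (Nat.cast_nonneg _) h0)
        (pow_nonneg hD0 _)
    refine le_trans hstep ?_
    have heq : D ^ wtF m * (D ^ (n.natAbs + 2 * L) * (D ^ E₀ * ffun n)) =
        D ^ (wtF m + (n.natAbs + 2 * L) + E₀) * ffun n := by
      rw [pow_add, pow_add]; ring
    rw [heq]
    have hexp : wtF m + (n.natAbs + 2 * L) + E₀ ≤
        (6 * (A + B) + 5) * (wtF m + n.natAbs + 1) := by
      rw [hE₀, hL]
      nlinarith [Nat.zero_le ((A + B) * n.natAbs)]
    calc D ^ (wtF m + (n.natAbs + 2 * L) + E₀) * ffun n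
        ≤ D ^ ((6 * (A + B) + 5) * (wtF m + n.natAbs + 1)) * ffun n :=
          mul_le_mul_of_nonneg_right (pow_le_pow_right₀ hD1 hexp) (ffun_nonneg n)
      _ = (D ^ (6 * (A + B) + 5)) ^ (wtF m + n.natAbs + 1) * ffun n := by
          rw [← pow_mul]
end

section
/- Define pow : ℕ × ℤ → ℝ by pow(a,b) = a^b (the real zpow) if a ≥ 1, pow(0,b) = 1 if b ≤ 0, and pow(0,b) = 0 if b > 0. Then for every real number C' ≥ 1 there exists a real number C₀ ≥ 1 such that: for all integers m₁, m₂ ≥ 0 and all n₁, n₂ ∈ ℤ with n₁ ≥ −C'(m₁+1) and n₂ ≥ −C'(m₂+1), setting m = m₁ + m₂ and n = n₁ + n₂, one has pow(m₁, n₁) · pow(m₂, n₂) ≤ C₀^{m + |n| + 1} · pow(m, n). -/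
/-- `pow a b = a ^ b` (real `zpow`) if `a ≥ 1`; `pow 0 b = 1` if `b ≤ 0` and `pow 0 b = 0` if
`b > 0` (the latter being the value of the real `zpow` `(0 : ℝ) ^ b` for `b > 0`). -/
noncomputable def powIM (a : ℕ) (b : ℤ) : ℝ := if a = 0 ∧ b ≤ 0 then 1 else (a : ℝ) ^ b

lemma powIM_nonneg (a : ℕ) (b : ℤ) : 0 ≤ powIM a b := by
  unfold powIM
  split
  · norm_num
  · exact zpow_nonneg (by positivity) _

lemma powIM_eq (a : ℕ) (b : ℤ) (h : a = 0 → b ≤ 0) :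
    powIM a b = (max (a : ℝ) 1) ^ b := by
  unfold powIM
  rcases Nat.eq_zero_or_pos a with rfl | hpos
  · rw [if_pos ⟨rfl, h rfl⟩]
    norm_num
  · have h1 : (1 : ℝ) ≤ (a : ℝ) := by exact_mod_cast hpos
    rw [if_neg (fun hc => by omega), max_eq_left h1]

lemma aux_bound (C' a b : ℝ) (hC' : 1 ≤ C') (ha : 1 ≤ a) (hab : a ≤ b) (n : ℤ)
    (hn : -(2 * C' * a) ≤ (n : ℝ)) :
    a ^ n ≤ Real.exp (2 * C' * b) * b ^ n := by
  have hb : (1 : ℝ) ≤ b := le_trans ha hab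
  have ha0 : (0 : ℝ) < a := by linarith
  have hb0 : (0 : ℝ) < b := by linarith
  have hba : (1 : ℝ) ≤ b / a := (one_le_div ha0).mpr hab
  set x : ℝ := (n : ℝ) with hx
  have key : (b / a) ^ (-x) ≤ Real.exp (2 * C' * b) := by
    have h1 : (b / a) ^ (-x) ≤ (b / a) ^ (2 * C' * a) :=
      Real.rpow_le_rpow_of_exponent_le hba (by linarith)
    have h2 : (b / a) ^ (2 * C' * a) ≤ Real.exp (2 * C' * b) := by
      rw [Real.rpow_def_of_pos (by positivity)]
      apply Real.exp_le_exp.mpr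
      have h3 : Real.log (b / a) ≤ b / a - 1 :=
        Real.log_le_sub_one_of_pos (by positivity)
      have h4 : a * (b / a) = b := by field_simp
      have hCa : (0 : ℝ) ≤ 2 * C' * a := by nlinarith
      nlinarith [mul_le_mul_of_nonneg_right h3 hCa]
    exact le_trans h1 h2
  have e1 : a ^ n = b ^ x * (b / a) ^ (-x) := by
    rw [← Real.rpow_intCast a n, Real.rpow_neg (by positivity),
      ← Real.inv_rpow (by positivity), inv_div,
      ← Real.mul_rpow hb0.le (by positivity)]
    congr 1
    field_simp
  calc a ^ n = b ^ x * (b / a) ^ (-x) := e1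
    _ ≤ b ^ x * Real.exp (2 * C' * b) :=
        mul_le_mul_of_nonneg_left key (Real.rpow_nonneg hb0.le x)
    _ = Real.exp (2 * C' * b) * b ^ n := by rw [mul_comm, hx, Real.rpow_intCast]

/-- For every real `C' ≥ 1` there exists `C₀ ≥ 1` such that for all integers
`m₁, m₂ ≥ 0` and all `n₁, n₂ ∈ ℤ` with `n₁ ≥ −C'(m₁+1)` and `n₂ ≥ −C'(m₂+1)`, setting
`m = m₁ + m₂` and `n = n₁ + n₂`, one has
`pow m₁ n₁ · pow m₂ n₂ ≤ C₀^{m+|n|+1} · pow m n`. -/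
theorem stmt_11 (C' : ℝ) (hC' : 1 ≤ C') :
    ∃ C₀ : ℝ, 1 ≤ C₀ ∧ ∀ (m₁ m₂ : ℕ) (n₁ n₂ : ℤ),
      -C' * ((m₁ : ℝ) + 1) ≤ (n₁ : ℝ) → -C' * ((m₂ : ℝ) + 1) ≤ (n₂ : ℝ) →
      powIM m₁ n₁ * powIM m₂ n₂ ≤
        C₀ ^ ((m₁ + m₂) + (n₁ + n₂).natAbs + 1) * powIM (m₁ + m₂) (n₁ + n₂) := by
  refine ⟨Real.exp (4 * C'), Real.one_le_exp (by linarith), ?_⟩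
  intro m₁ m₂ n₁ n₂ h₁ h₂
  have hRHSpos : ∀ N : ℕ, ∀ a : ℕ, ∀ b : ℤ,
      0 ≤ Real.exp (4 * C') ^ N * powIM a b :=
    fun N a b => mul_nonneg (pow_nonneg (Real.exp_pos _).le _) (powIM_nonneg a b)
  by_cases hz₁ : m₁ = 0 ∧ 0 < n₁
  · have : powIM m₁ n₁ = 0 := by
      unfold powIM
      rw [if_neg (fun hc => absurd hc.2 (not_le.mpr hz₁.2)), hz₁.1, Nat.cast_zero]
      exact zero_zpow n₁ (by omega)
    rw [this, zero_mul]
    exact hRHSpos _ _ _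
  by_cases hz₂ : m₂ = 0 ∧ 0 < n₂
  · have : powIM m₂ n₂ = 0 := by
      unfold powIM
      rw [if_neg (fun hc => absurd hc.2 (not_le.mpr hz₂.2)), hz₂.1, Nat.cast_zero]
      exact zero_zpow n₂ (by omega)
    rw [this, mul_zero]
    exact hRHSpos _ _ _
  push_neg at hz₁ hz₂
  have e₁ : powIM m₁ n₁ = (max (m₁ : ℝ) 1) ^ n₁ :=
    powIM_eq _ _ (fun h => hz₁ h)
  have e₂ : powIM m₂ n₂ = (max (m₂ : ℝ) 1) ^ n₂ :=
    powIM_eq _ _ (fun h => hz₂ h)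
  have en : powIM (m₁ + m₂) (n₁ + n₂) = (max ((m₁ + m₂ : ℕ) : ℝ) 1) ^ (n₁ + n₂) := by
    refine powIM_eq _ _ (fun h => ?_)
    have hm1 : m₁ = 0 := by omega
    have hm2 : m₂ = 0 := by omega
    have t1 := hz₁ hm1
    have t2 := hz₂ hm2
    omega
  set a₁ : ℝ := max (m₁ : ℝ) 1 with ha₁
  set a₂ : ℝ := max (m₂ : ℝ) 1 with ha₂
  set b : ℝ := max ((m₁ + m₂ : ℕ) : ℝ) 1 with hbdef
  have ha₁1 : (1 : ℝ) ≤ a₁ := le_max_right _ _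
  have ha₂1 : (1 : ℝ) ≤ a₂ := le_max_right _ _
  have hb1 : (1 : ℝ) ≤ b := le_max_right _ _
  have hb0 : (0 : ℝ) < b := by linarith
  have hab₁ : a₁ ≤ b := max_le_max (by push_cast; linarith [Nat.cast_nonneg (α := ℝ) m₂]) le_rfl
  have hab₂ : a₂ ≤ b := max_le_max (by push_cast; linarith [Nat.cast_nonneg (α := ℝ) m₁]) le_rfl
  have hC0 : (0 : ℝ) ≤ C' := by linarith
  have hn₁ : -(2 * C' * a₁) ≤ (n₁ : ℝ) := by
    have t : (m₁ : ℝ) + 1 ≤ 2 * a₁ := by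
      have := le_max_left (m₁ : ℝ) 1
      linarith
    have := mul_le_mul_of_nonneg_left t hC0
    linarith
  have hn₂ : -(2 * C' * a₂) ≤ (n₂ : ℝ) := by
    have t : (m₂ : ℝ) + 1 ≤ 2 * a₂ := by
      have := le_max_left (m₂ : ℝ) 1
      linarith
    have := mul_le_mul_of_nonneg_left t hC0
    linarith
  have aux₁ := aux_bound C' a₁ b hC' ha₁1 hab₁ n₁ hn₁
  have aux₂ := aux_bound C' a₂ b hC' ha₂1 hab₂ n₂ hn₂
  set N : ℕ := (m₁ + m₂) + (n₁ + n₂).natAbs + 1 with hN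
  have hbN : b ≤ (N : ℝ) := by
    have h1 : ((m₁ + m₂ : ℕ) : ℝ) ≤ (N : ℝ) := by
      push_cast
      exact_mod_cast (show m₁ + m₂ ≤ N by omega)
    have h2 : (1 : ℝ) ≤ (N : ℝ) := by
      have : 1 ≤ N := by omega
      exact_mod_cast this
    exact max_le h1 h2
  have hexp : Real.exp (2 * C' * b) * Real.exp (2 * C' * b) ≤ Real.exp (4 * C') ^ N := by
    rw [← Real.exp_add, ← Real.exp_nat_mul]
    apply Real.exp_le_exp.mpr
    have : 2 * C' * b + 2 * C' * b = 4 * C' * b := by ring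
    rw [this]
    have h4 : (0 : ℝ) ≤ 4 * C' := by linarith
    calc 4 * C' * b ≤ 4 * C' * (N : ℝ) := mul_le_mul_of_nonneg_left hbN h4
      _ = (N : ℝ) * (4 * C') := by ring
  calc powIM m₁ n₁ * powIM m₂ n₂ = a₁ ^ n₁ * a₂ ^ n₂ := by rw [e₁, e₂]
    _ ≤ (Real.exp (2 * C' * b) * b ^ n₁) * (Real.exp (2 * C' * b) * b ^ n₂) := by
        apply mul_le_mul aux₁ aux₂ (zpow_nonneg (by linarith) _)
        positivity
    _ = (Real.exp (2 * C' * b) * Real.exp (2 * C' * b)) * b ^ (n₁ + n₂) := by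
        rw [zpow_add₀ (ne_of_gt hb0)]
        ring
    _ ≤ Real.exp (4 * C') ^ N * b ^ (n₁ + n₂) :=
        mul_le_mul_of_nonneg_right hexp (zpow_nonneg hb0.le _)
    _ = Real.exp (4 * C') ^ N * powIM (m₁ + m₂) (n₁ + n₂) := by rw [en]
end
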